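/- arXiv:2411.14690 — 4 statements merged into one kernel-verified Lean document; each statement's English description precedes it below -/
import Mathlib

section
/- Suppose ρ is bounded (there exists M such that |ρ(r)| ≤ M for all r ≥ 0). If x, x' ∈ ℝ^d satisfy f(x) > 0, f(x') > 0 and f(x) ≠ f(x'), then k_α(x, x') → 0 as α → ∞. (Part (b), case (i) of Proposition 3: when both layer values are positive and distinct, the prefactor tends to zero while ρ stays bounded.) -/
/-- Proposition 3(b), case (i): if `ρ` is bounded and the previous-layer values
`f x > 0`, `f x' > 0` are distinct, then the Paciorek-type kernel with
length-scale function `H_α(x) = exp (α * f x)` tends to `0` as `α → ∞`. -/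
theorem paciorek_kernel_tendsto_zero_pos_pos
    (d : ℕ) (hd : 1 ≤ d) (σ2 : ℝ) (hσ2 : 0 < σ2) (ρ : ℝ → ℝ)
    (M : ℝ) (hρ : ∀ r : ℝ, 0 ≤ r → |ρ r| ≤ M)
    (f : EuclideanSpace ℝ (Fin d) → ℝ)
    (H : ℝ → EuclideanSpace ℝ (Fin d) → ℝ)
    (hH : ∀ (α : ℝ) (x : EuclideanSpace ℝ (Fin d)), H α x = Real.exp (α * f x))
    (k : ℝ → EuclideanSpace ℝ (Fin d) → EuclideanSpace ℝ (Fin d) → ℝ)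
    (hk : ∀ (α : ℝ) (x x' : EuclideanSpace ℝ (Fin d)),
      k α x x' = σ2 * ((2:ℝ) ^ ((d:ℝ)/2) * (H α x * H α x') ^ ((d:ℝ)/4) /
          (H α x + H α x') ^ ((d:ℝ)/2)) *
        ρ (‖x - x'‖ / Real.sqrt ((H α x + H α x') / 2)))
    (x x' : EuclideanSpace ℝ (Fin d))
    (hfx : 0 < f x) (hfx' : 0 < f x') (hne : f x ≠ f x') :
    Filter.Tendsto (fun α : ℝ => k α x x') Filter.atTop (nhds 0) := by
  have hM : 0 ≤ M := le_trans (abs_nonneg _) (hρ 0 le_rfl)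
  set a := f x with ha
  set b := f x' with hb
  have hab : 0 < |a - b| := abs_pos.mpr (sub_ne_zero.mpr hne)
  have hd2 : (0:ℝ) < (d:ℝ) / 2 := by
    have : (1:ℝ) ≤ (d:ℝ) := by exact_mod_cast hd
    linarith
  set c : ℝ := |a - b| / 2 * ((d : ℝ) / 2) with hcdef
  have hc : 0 < c := by positivity
  apply squeeze_zero_norm'
    (a := fun α : ℝ => σ2 * (2:ℝ) ^ ((d:ℝ)/2) * M * Real.exp (-(α * c)))
  · filter_upwards [Filter.eventually_ge_atTop (0:ℝ)] with α hα
    rw [hk, hH, hH]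
    set u := α * a with hu
    set v := α * b with hv
    have he1 : (0:ℝ) < Real.exp u := Real.exp_pos u
    have he2 : (0:ℝ) < Real.exp v := Real.exp_pos v
    -- numerator
    have hN : (Real.exp u * Real.exp v) ^ ((d:ℝ)/4)
        = Real.exp ((u + v) * ((d:ℝ)/4)) := by
      rw [← Real.exp_add, Real.rpow_def_of_pos (Real.exp_pos _), Real.log_exp]
    -- denominator lower bound
    have hDlb : Real.exp (max u v * ((d:ℝ)/2))
        ≤ (Real.exp u + Real.exp v) ^ ((d:ℝ)/2) := by
      have h1 : Real.exp (max u v) ≤ Real.exp u + Real.exp v := by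
        rcases le_total u v with h | h
        · rw [max_eq_right h]; linarith
        · rw [max_eq_left h]; linarith
      calc Real.exp (max u v * ((d:ℝ)/2))
          = (Real.exp (max u v)) ^ ((d:ℝ)/2) := by
            rw [Real.rpow_def_of_pos (Real.exp_pos _), Real.log_exp]
        _ ≤ (Real.exp u + Real.exp v) ^ ((d:ℝ)/2) :=
            Real.rpow_le_rpow (Real.exp_pos _).le h1 hd2.le
    set D : ℝ := (Real.exp u + Real.exp v) ^ ((d:ℝ)/2) with hD
    have hDpos : 0 < D := by positivity
    set P : ℝ := (2:ℝ) ^ ((d:ℝ)/2) * (Real.exp u * Real.exp v) ^ ((d:ℝ)/4) / D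
      with hP
    have hPpos : 0 ≤ P := by positivity
    have hr : 0 ≤ ‖x - x'‖ / Real.sqrt ((Real.exp u + Real.exp v) / 2) :=
      div_nonneg (norm_nonneg _) (Real.sqrt_nonneg _)
    have habs : ‖σ2 * P * ρ (‖x - x'‖ / Real.sqrt ((Real.exp u + Real.exp v) / 2))‖
        = σ2 * P * |ρ (‖x - x'‖ / Real.sqrt ((Real.exp u + Real.exp v) / 2))| := by
      rw [Real.norm_eq_abs, abs_mul, abs_of_nonneg (by positivity : 0 ≤ σ2 * P)]
    rw [habs]
    have step1 : σ2 * P * |ρ (‖x - x'‖ / Real.sqrt ((Real.exp u + Real.exp v) / 2))|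
        ≤ σ2 * P * M :=
      mul_le_mul_of_nonneg_left (hρ _ hr) (by positivity)
    -- P ≤ 2^{d/2} * exp(-(α*c))
    have hPbound : P ≤ (2:ℝ) ^ ((d:ℝ)/2) * Real.exp (-(α * c)) := by
      have hdiv : (Real.exp u * Real.exp v) ^ ((d:ℝ)/4) / D
          ≤ Real.exp (-(α * c)) := by
        calc (Real.exp u * Real.exp v) ^ ((d:ℝ)/4) / D
            ≤ (Real.exp u * Real.exp v) ^ ((d:ℝ)/4)
                / Real.exp (max u v * ((d:ℝ)/2)) := by
              apply div_le_div_of_nonneg_left (by positivity) (Real.exp_pos _) hDlb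
          _ = Real.exp ((u + v) * ((d:ℝ)/4) - max u v * ((d:ℝ)/2)) := by
              rw [hN, Real.exp_sub]
          _ = Real.exp (-(α * c)) := by
              congr 1
              have hmax : max u v = (u + v + |u - v|) / 2 := by
                rcases le_total u v with h | h
                · rw [max_eq_right h, abs_of_nonpos (sub_nonpos.2 h)]; ring
                · rw [max_eq_left h, abs_of_nonneg (sub_nonneg.2 h)]; ring
              have huv : |u - v| = α * |a - b| := by
                rw [hu, hv, ← mul_sub, abs_mul, abs_of_nonneg hα]
              rw [hmax, huv, hcdef]; ring
      calc P = (2:ℝ) ^ ((d:ℝ)/2) * ((Real.exp u * Real.exp v) ^ ((d:ℝ)/4) / D) := by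
            rw [hP]; ring
        _ ≤ (2:ℝ) ^ ((d:ℝ)/2) * Real.exp (-(α * c)) :=
            mul_le_mul_of_nonneg_left hdiv (by positivity)
    calc σ2 * P * |ρ (‖x - x'‖ / Real.sqrt ((Real.exp u + Real.exp v) / 2))|
        ≤ σ2 * P * M := step1
      _ ≤ σ2 * ((2:ℝ) ^ ((d:ℝ)/2) * Real.exp (-(α * c))) * M := by
          apply mul_le_mul_of_nonneg_right _ hM
          exact mul_le_mul_of_nonneg_left hPbound hσ2.le
      _ = σ2 * (2:ℝ) ^ ((d:ℝ)/2) * M * Real.exp (-(α * c)) := by ring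
  · have h1 : Filter.Tendsto (fun α : ℝ => α * c) Filter.atTop Filter.atTop :=
      Filter.Tendsto.atTop_mul_const hc Filter.tendsto_id
    have h2 : Filter.Tendsto (fun α : ℝ => Real.exp (-(α * c)))
        Filter.atTop (nhds 0) :=
      Real.tendsto_exp_atBot.comp (Filter.tendsto_neg_atTop_atBot.comp h1)
    have h3 := h2.const_mul (σ2 * (2:ℝ) ^ ((d:ℝ)/2) * M)
    simpa using h3
end

section
/- Suppose ρ is bounded (there exists M such that |ρ(r)| ≤ M for all r ≥ 0). If x, x' ∈ ℝ^d satisfy f(x) > 0 and f(x') < 0, then k_α(x, x') → 0 as α → ∞. (Part (b), case (ii) of Proposition 3: when the layer values have opposite signs, the prefactor tends to zero while ρ stays bounded.) -/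
/-- Proposition 3(b), case (ii): if `ρ` is bounded and the previous-layer values
`f x > 0`, `f x' < 0` have opposite signs, then the Paciorek-type kernel with
length-scale function `H_α(x) = exp (α * f x)` tends to `0` as `α → ∞`. -/
theorem paciorek_kernel_tendsto_zero_pos_neg
    (d : ℕ) (hd : 1 ≤ d) (σ2 : ℝ) (hσ2 : 0 < σ2) (ρ : ℝ → ℝ)
    (M : ℝ) (hρ : ∀ r : ℝ, 0 ≤ r → |ρ r| ≤ M)
    (f : EuclideanSpace ℝ (Fin d) → ℝ)
    (H : ℝ → EuclideanSpace ℝ (Fin d) → ℝ)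
    (hH : ∀ (α : ℝ) (x : EuclideanSpace ℝ (Fin d)), H α x = Real.exp (α * f x))
    (k : ℝ → EuclideanSpace ℝ (Fin d) → EuclideanSpace ℝ (Fin d) → ℝ)
    (hk : ∀ (α : ℝ) (x x' : EuclideanSpace ℝ (Fin d)),
      k α x x' = σ2 * ((2:ℝ) ^ ((d:ℝ)/2) * (H α x * H α x') ^ ((d:ℝ)/4) /
          (H α x + H α x') ^ ((d:ℝ)/2)) *
        ρ (‖x - x'‖ / Real.sqrt ((H α x + H α x') / 2)))
    (x x' : EuclideanSpace ℝ (Fin d))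
    (hfx : 0 < f x) (hfx' : f x' < 0) :
    Filter.Tendsto (fun α : ℝ => k α x x') Filter.atTop (nhds 0) := by
  have hM : 0 ≤ M := le_trans (abs_nonneg _) (hρ 0 le_rfl)
  set a := f x
  set b := f x'
  set c : ℝ := (b - a) * ((d : ℝ) / 4) with hc
  have hcneg : c < 0 := by
    apply mul_neg_of_neg_of_pos (by linarith)
    positivity
  have hg : Filter.Tendsto (fun α : ℝ => σ2 * (2 ^ ((d:ℝ)/2)) * M * Real.exp (α * c))
      Filter.atTop (nhds 0) := by
    rw [show (0:ℝ) = σ2 * (2 ^ ((d:ℝ)/2)) * M * 0 by ring]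
    apply Filter.Tendsto.const_mul
    exact Real.tendsto_exp_atBot.comp (Filter.tendsto_id.atTop_mul_const_of_neg hcneg)
  apply squeeze_zero_norm _ hg
  intro α
  have hx : H α x = Real.exp (α * a) := hH α x
  have hx' : H α x' = Real.exp (α * b) := hH α x'
  have hpos : 0 < H α x := hx ▸ Real.exp_pos _
  have hpos' : 0 < H α x' := hx' ▸ Real.exp_pos _
  have hsum : 0 < H α x + H α x' := by linarith
  have hPnonneg : 0 ≤ (2:ℝ) ^ ((d:ℝ)/2) * (H α x * H α x') ^ ((d:ℝ)/4) /
      (H α x + H α x') ^ ((d:ℝ)/2) := by positivity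
  have hPbound : (2:ℝ) ^ ((d:ℝ)/2) * (H α x * H α x') ^ ((d:ℝ)/4) /
      (H α x + H α x') ^ ((d:ℝ)/2) ≤ 2 ^ ((d:ℝ)/2) * Real.exp (α * c) := by
    have h1 : (H α x) ^ ((d:ℝ)/2) ≤ (H α x + H α x') ^ ((d:ℝ)/2) :=
      Real.rpow_le_rpow hpos.le (by linarith) (by positivity)
    have h2 : (2:ℝ) ^ ((d:ℝ)/2) * (H α x * H α x') ^ ((d:ℝ)/4) /
        (H α x + H α x') ^ ((d:ℝ)/2) ≤ (2:ℝ) ^ ((d:ℝ)/2) * (H α x * H α x') ^ ((d:ℝ)/4) /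
        (H α x) ^ ((d:ℝ)/2) :=
      div_le_div_of_nonneg_left (by positivity) (by positivity) h1
    refine h2.trans (le_of_eq ?_)
    rw [hx, hx', ← Real.exp_add, ← Real.exp_mul, ← Real.exp_mul, mul_div_assoc,
      ← Real.exp_sub, hc]
    ring_nf
  have hr : 0 ≤ ‖x - x'‖ / Real.sqrt ((H α x + H α x') / 2) := by positivity
  rw [hk]
  rw [Real.norm_eq_abs, abs_mul, abs_mul, abs_of_pos hσ2, abs_of_nonneg hPnonneg]
  calc σ2 * ((2:ℝ) ^ ((d:ℝ)/2) * (H α x * H α x') ^ ((d:ℝ)/4) /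
      (H α x + H α x') ^ ((d:ℝ)/2)) * |ρ (‖x - x'‖ / Real.sqrt ((H α x + H α x') / 2))|
      ≤ σ2 * (2 ^ ((d:ℝ)/2) * Real.exp (α * c)) * M := by
        apply mul_le_mul (by nlinarith [hPbound]) (hρ _ hr) (abs_nonneg _)
        positivity
    _ = σ2 * 2 ^ ((d:ℝ)/2) * M * Real.exp (α * c) := by ring
end

section
/- Suppose ρ is bounded (there exists M such that |ρ(r)| ≤ M for all r ≥ 0) and ρ(r) → 0 as r → ∞. If x, x' ∈ ℝ^d satisfy x ≠ x', f(x) < 0 and f(x') < 0, then k_α(x, x') → 0 as α → ∞. (Part (b), case (iii) of Proposition 3: when both layer values are negative, the quadratic-form argument tends to infinity, so ρ tends to 0 while the prefactor stays bounded.) -/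
lemma pref_le_one (d : ℕ) {a b : ℝ} (ha : 0 < a) (hb : 0 < b) :
    (2:ℝ) ^ ((d:ℝ)/2) * (a * b) ^ ((d:ℝ)/4) / (a + b) ^ ((d:ℝ)/2) ≤ 1 := by
  rw [div_le_one (Real.rpow_pos_of_pos (by linarith) _)]
  have hab : (0:ℝ) ≤ a * b := le_of_lt (mul_pos ha hb)
  have key : 2 * Real.sqrt (a * b) ≤ a + b := by
    have hs := Real.sq_sqrt ha.le
    have ht := Real.sq_sqrt hb.le
    have hst : Real.sqrt (a*b) = Real.sqrt a * Real.sqrt b := Real.sqrt_mul ha.le b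
    nlinarith [sq_nonneg (Real.sqrt a - Real.sqrt b), Real.sqrt_nonneg a, Real.sqrt_nonneg b]
  have h1 : (2 * Real.sqrt (a*b)) ^ ((d:ℝ)/2) ≤ (a + b) ^ ((d:ℝ)/2) :=
    Real.rpow_le_rpow (by positivity) key (by positivity)
  have h2 : (2 * Real.sqrt (a*b)) ^ ((d:ℝ)/2)
      = (2:ℝ) ^ ((d:ℝ)/2) * (a * b) ^ ((d:ℝ)/4) := by
    rw [Real.mul_rpow (by norm_num) (Real.sqrt_nonneg _), Real.sqrt_eq_rpow,
      ← Real.rpow_mul hab]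
    ring_nf
  linarith [h1, h2.symm.le]

/-- Proposition 3(b), case (iii): if `ρ` is bounded and `ρ(r) → 0` as `r → ∞`,
and `x ≠ x'` with `f x < 0`, `f x' < 0`, then the Paciorek-type kernel with
length-scale function `H_α(x) = exp (α * f x)` tends to `0` as `α → ∞`. -/
theorem paciorek_kernel_tendsto_zero_neg_neg
    (d : ℕ) (hd : 1 ≤ d) (σ2 : ℝ) (hσ2 : 0 < σ2) (ρ : ℝ → ℝ)
    (M : ℝ) (hρ : ∀ r : ℝ, 0 ≤ r → |ρ r| ≤ M)
    (hρ0 : Filter.Tendsto ρ Filter.atTop (nhds 0))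
    (f : EuclideanSpace ℝ (Fin d) → ℝ)
    (H : ℝ → EuclideanSpace ℝ (Fin d) → ℝ)
    (hH : ∀ (α : ℝ) (x : EuclideanSpace ℝ (Fin d)), H α x = Real.exp (α * f x))
    (k : ℝ → EuclideanSpace ℝ (Fin d) → EuclideanSpace ℝ (Fin d) → ℝ)
    (hk : ∀ (α : ℝ) (x x' : EuclideanSpace ℝ (Fin d)),
      k α x x' = σ2 * ((2:ℝ) ^ ((d:ℝ)/2) * (H α x * H α x') ^ ((d:ℝ)/4) /
          (H α x + H α x') ^ ((d:ℝ)/2)) *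
        ρ (‖x - x'‖ / Real.sqrt ((H α x + H α x') / 2)))
    (x x' : EuclideanSpace ℝ (Fin d))
    (hxx' : x ≠ x') (hfx : f x < 0) (hfx' : f x' < 0) :
    Filter.Tendsto (fun α : ℝ => k α x x') Filter.atTop (nhds 0) := by
  have hnorm : 0 < ‖x - x'‖ := by
    rw [norm_pos_iff, sub_ne_zero]; exact hxx'
  have hHpos : ∀ (α : ℝ) (y : EuclideanSpace ℝ (Fin d)), 0 < H α y := fun α y => by
    rw [hH]; exact Real.exp_pos _
  -- exp(α f x) → 0
  have hexp : ∀ y : EuclideanSpace ℝ (Fin d), f y < 0 →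
      Filter.Tendsto (fun α : ℝ => H α y) Filter.atTop (nhds 0) := by
    intro y hy
    have h1 : Filter.Tendsto (fun α : ℝ => α * f y) Filter.atTop Filter.atBot :=
      Filter.tendsto_id.atTop_mul_const_of_neg hy
    have h2 := Real.tendsto_exp_atBot.comp h1
    have h3 : Filter.Tendsto (fun α : ℝ => Real.exp (α * f y)) Filter.atTop (nhds 0) := h2
    simpa [hH] using h3
  have hsum : Filter.Tendsto (fun α : ℝ => (H α x + H α x') / 2) Filter.atTop (nhds 0) := by
    have := ((hexp x hfx).add (hexp x' hfx')).div_const 2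
    simpa using this
  have hsqrt : Filter.Tendsto (fun α : ℝ => Real.sqrt ((H α x + H α x') / 2))
      Filter.atTop (nhdsWithin 0 (Set.Ioi 0)) := by
    apply tendsto_nhdsWithin_of_tendsto_nhds_of_eventually_within
    · have := hsum.sqrt
      rwa [Real.sqrt_zero] at this
    · filter_upwards with α
      exact Real.sqrt_pos.mpr
        (div_pos (by linarith [hHpos α x, hHpos α x']) two_pos)
  have hinv : Filter.Tendsto (fun α : ℝ => (Real.sqrt ((H α x + H α x') / 2))⁻¹)
      Filter.atTop Filter.atTop := hsqrt.inv_tendsto_nhdsGT_zero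
  have harg : Filter.Tendsto
      (fun α : ℝ => ‖x - x'‖ / Real.sqrt ((H α x + H α x') / 2))
      Filter.atTop Filter.atTop := by
    simpa [div_eq_mul_inv] using Filter.Tendsto.const_mul_atTop hnorm hinv
  have hρarg : Filter.Tendsto
      (fun α : ℝ => ρ (‖x - x'‖ / Real.sqrt ((H α x + H α x') / 2)))
      Filter.atTop (nhds 0) := hρ0.comp harg
  have htendg : Filter.Tendsto
      (fun α : ℝ => σ2 * |ρ (‖x - x'‖ / Real.sqrt ((H α x + H α x') / 2))|)
      Filter.atTop (nhds 0) := by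
    have := (hρarg.abs).const_mul σ2
    simpa using this
  refine squeeze_zero_norm (fun α => ?_) htendg
  rw [hk]
  have hpref0 : 0 ≤ (2:ℝ) ^ ((d:ℝ)/2) * (H α x * H α x') ^ ((d:ℝ)/4) /
      (H α x + H α x') ^ ((d:ℝ)/2) := by
    have h1 := hHpos α x; have h2 := hHpos α x'; positivity
  have hpref1 := pref_le_one d (hHpos α x) (hHpos α x')
  rw [Real.norm_eq_abs, abs_mul, abs_mul, abs_of_pos hσ2, abs_of_nonneg hpref0]
  calc σ2 * ((2:ℝ) ^ ((d:ℝ)/2) * (H α x * H α x') ^ ((d:ℝ)/4) /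
            (H α x + H α x') ^ ((d:ℝ)/2)) *
          |ρ (‖x - x'‖ / Real.sqrt ((H α x + H α x') / 2))|
        ≤ σ2 * 1 * |ρ (‖x - x'‖ / Real.sqrt ((H α x + H α x') / 2))| := by
          apply mul_le_mul_of_nonneg_right _ (abs_nonneg _)
          exact mul_le_mul_of_nonneg_left hpref1 hσ2.le
      _ = σ2 * |ρ (‖x - x'‖ / Real.sqrt ((H α x + H α x') / 2))| := by ring
end

section
/- Suppose in addition that u is locally Lipschitz, that ρ(0) = 1, and that ρ has a one-sided derivative at 0 from the right, ρ'₊(0), with ρ'₊(0) ≠ 0. If k is stationary, i.e. k(x + t, x' + t) = k(x, x') for all x, x', t ∈ ℝ^d, then u is constant on ℝ^d. (The forward direction of Proposition 2, stated at the level of the Paciorek covariance function: a stationary layer-conditional covariance forces the length-scale process to be constant.) -/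
open Filter Asymptotics Set Topology

/-- The Paciorek prefactor `t ↦ c * ((a*t)^p / (a+t)^(2p))` has derivative `0` at `t = a`. -/
private lemma paciorek_phi_hasDerivAt (a c p : ℝ) (ha : 0 < a) :
    HasDerivAt (fun t : ℝ => c * ((a * t) ^ p / (a + t) ^ (2 * p))) 0 a := by
  have hf : HasDerivAt (fun t : ℝ => (a * t) ^ p) (a * p * (a * a) ^ (p - 1)) a := by
    have h1 : HasDerivAt (fun t : ℝ => a * t) a a := by
      simpa using (hasDerivAt_id a).const_mul a
    simpa using h1.rpow_const (Or.inl (by positivity))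
  have hg : HasDerivAt (fun t : ℝ => (a + t) ^ (2 * p)) (2 * p * (a + a) ^ (2 * p - 1)) a := by
    have h1 : HasDerivAt (fun t : ℝ => a + t) 1 a := by
      simpa using (hasDerivAt_id a).const_add a
    simpa using h1.rpow_const (Or.inl (by positivity))
  have hgne : (a + a) ^ (2 * p) ≠ 0 := by positivity
  have hdiv := (hf.div hg hgne).const_mul c
  have e1 : (a * a) ^ p = (a * a) ^ (p - 1) * (a * a) := by
    rw [← Real.rpow_add_one (by positivity : (a * a) ≠ 0) (p - 1)]
    norm_num
  have e2 : (a + a) ^ (2 * p) = (a + a) ^ (2 * p - 1) * (a + a) := by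
    rw [← Real.rpow_add_one (by positivity : (a + a) ≠ 0) (2 * p - 1)]
    norm_num
  have hnum : a * p * (a * a) ^ (p - 1) * (a + a) ^ (2 * p)
      - (a * a) ^ p * (2 * p * (a + a) ^ (2 * p - 1)) = 0 := by
    rw [e1, e2]; ring
  have h0 : c * ((a * p * (a * a) ^ (p - 1) * (a + a) ^ (2 * p)
      - (a * a) ^ p * (2 * p * (a + a) ^ (2 * p - 1))) / ((a + a) ^ (2 * p)) ^ 2) = 0 := by
    rw [hnum]; simp
  exact h0 ▸ hdiv

/-- One-sided derivative at `0⁺` of `s ↦ k x (x + s•e)` for the Paciorek kernel. -/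
private lemma paciorek_aux (d : ℕ) (σ2 : ℝ) (ρ : ℝ → ℝ)
    (u : EuclideanSpace ℝ (Fin d) → ℝ) (hu : ∀ x, 0 < u x)
    (k : EuclideanSpace ℝ (Fin d) → EuclideanSpace ℝ (Fin d) → ℝ)
    (hk : ∀ x x' : EuclideanSpace ℝ (Fin d),
      k x x' = σ2 * ((2:ℝ) ^ ((d:ℝ)/2) * (u x * u x') ^ ((d:ℝ)/4) /
          (u x + u x') ^ ((d:ℝ)/2)) *
        ρ (‖x - x'‖ / Real.sqrt ((u x + u x') / 2)))
    (hLip : LocallyLipschitz u) (hρ0 : ρ 0 = 1)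
    (ρ'0 : ℝ) (hρ' : HasDerivWithinAt ρ ρ'0 (Set.Ici (0:ℝ)) 0)
    (x e : EuclideanSpace ℝ (Fin d)) (he : ‖e‖ = 1) :
    Tendsto (fun s : ℝ => (k x (x + s • e) - σ2) / s) (𝓝[>] (0:ℝ))
      (𝓝 (σ2 * (ρ'0 / Real.sqrt (u x)))) := by
  have ha : 0 < u x := hu x
  set c : ℝ := (2:ℝ) ^ ((d:ℝ)/2) with hc
  -- auxiliary functions
  set b : ℝ → ℝ := fun s => u (x + s • e) with hbdef
  set β : ℝ → ℝ := fun s => Real.sqrt ((u x + b s) / 2) with hβdef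
  set α : ℝ → ℝ := fun s => s / β s with hαdef
  set φ : ℝ → ℝ := fun t => c * ((u x * t) ^ ((d:ℝ)/4) / (u x + t) ^ ((d:ℝ)/2)) with hφdef
  have hbpos : ∀ s, 0 < b s := fun s => hu _
  have hβpos : ∀ s, 0 < β s := fun s => Real.sqrt_pos.mpr (by have := hbpos s; positivity)
  -- continuity facts
  have hcont0 : Tendsto (fun s : ℝ => x + s • e) (𝓝 0) (𝓝 x) := by
    have : Continuous (fun s : ℝ => x + s • e) := by continuity
    simpa using this.tendsto 0
  have hbcont : Tendsto b (𝓝[>] (0:ℝ)) (𝓝 (u x)) :=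
    ((hLip.continuous.tendsto x).comp hcont0).mono_left nhdsWithin_le_nhds
  have hβtend : Tendsto β (𝓝[>] (0:ℝ)) (𝓝 (Real.sqrt (u x))) := by
    have h1 : Tendsto (fun s => (u x + b s) / 2) (𝓝[>] (0:ℝ)) (𝓝 ((u x + u x) / 2)) :=
      (tendsto_const_nhds.add hbcont).div_const 2
    have h2 := (Real.continuous_sqrt.tendsto ((u x + u x) / 2)).comp h1
    rw [add_self_div_two] at h2
    exact h2
  have hsqrtne : Real.sqrt (u x) ≠ 0 := (Real.sqrt_pos.mpr ha).ne'
  have hαtend : Tendsto α (𝓝[>] (0:ℝ)) (𝓝[>] (0:ℝ)) := by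
    rw [tendsto_nhdsWithin_iff]
    constructor
    · have hs : Tendsto (fun s : ℝ => s) (𝓝[>] (0:ℝ)) (𝓝 0) :=
        tendsto_id.mono_left nhdsWithin_le_nhds
      have h3 := hs.div hβtend hsqrtne
      rw [zero_div] at h3
      exact h3
    · filter_upwards [self_mem_nhdsWithin] with s hs
      exact div_pos hs (hβpos s)
  have hslope : Tendsto (fun s => slope ρ 0 (α s)) (𝓝[>] (0:ℝ)) (𝓝 ρ'0) := by
    have h1 := hasDerivWithinAt_iff_tendsto_slope.mp hρ'
    rw [Set.Ici_sdiff_left] at h1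
    exact h1.comp hαtend
  -- the prefactor φ
  have hφ' : HasDerivAt φ 0 (u x) := by
    have := paciorek_phi_hasDerivAt (u x) c ((d:ℝ)/4) ha
    simpa [hφdef, show 2 * ((d:ℝ)/4) = (d:ℝ)/2 by ring] using this
  have hφa : φ (u x) = 1 := by
    have h1 : (u x * u x) ^ ((d:ℝ)/4) = (u x) ^ ((d:ℝ)/2) := by
      have h2 : u x * u x = u x ^ (((2:ℕ):ℝ)) := by
        rw [Real.rpow_natCast]; ring
      rw [h2, ← Real.rpow_mul ha.le]
      congr 1
      push_cast
      ring
    have h2 : (u x + u x) ^ ((d:ℝ)/2) = c * (u x) ^ ((d:ℝ)/2) := by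
      rw [show u x + u x = 2 * u x by ring, Real.mul_rpow (by norm_num) ha.le, hc]
    have h3 : c * (u x) ^ ((d:ℝ)/2) ≠ 0 := by
      have : (0:ℝ) < c := by rw [hc]; positivity
      positivity
    simp only [hφdef, h1, h2]
    field_simp
    exact div_self (ne_of_gt (by rw [hc]; positivity))
  have hφ1 : Tendsto (fun s => φ (b s)) (𝓝[>] (0:ℝ)) (𝓝 1) := by
    have := (hφ'.continuousAt.tendsto).comp hbcont
    rwa [hφa] at this
  -- Lipschitz big-O estimate
  have hBO : (fun s => b s - u x) =O[𝓝[>] (0:ℝ)] (fun s : ℝ => s) := by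
    obtain ⟨K, t, htmem, hKl⟩ := hLip x
    have hev : (fun s : ℝ => x + s • e) ⁻¹' t ∈ 𝓝 (0:ℝ) := hcont0 htmem
    rw [isBigO_iff]
    refine ⟨K, ?_⟩
    filter_upwards [nhdsWithin_le_nhds hev] with s hs
    have hx0 : x ∈ t := mem_of_mem_nhds htmem
    have hd := hKl.dist_le_mul _ hs _ hx0
    have hd2 : dist (x + s • e) x = |s| := by
      rw [dist_eq_norm]
      simp [norm_smul, he]
    rw [Real.dist_eq, hd2] at hd
    simpa [Real.norm_eq_abs] using hd
  have hT3 : Tendsto (fun s => (φ (b s) - 1) / s) (𝓝[>] (0:ℝ)) (𝓝 0) := by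
    have hlo := hasDerivAt_iff_isLittleO.mp hφ'
    simp only [smul_zero, sub_zero, hφa] at hlo
    have hcomp : (fun s => φ (b s) - 1) =o[𝓝[>] (0:ℝ)] (fun s => b s - u x) :=
      hlo.comp_tendsto hbcont
    exact (hcomp.trans_isBigO hBO).tendsto_div_nhds_zero
  -- assemble the limit of the surrogate expression
  have hT : Tendsto
      (fun s => σ2 * (φ (b s) * (slope ρ 0 (α s) / β s) + (φ (b s) - 1) / s))
      (𝓝[>] (0:ℝ)) (𝓝 (σ2 * (1 * (ρ'0 / Real.sqrt (u x)) + 0))) :=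
    ((hφ1.mul (hslope.div hβtend hsqrtne)).add hT3).const_mul σ2
  have hT' : Tendsto
      (fun s => σ2 * (φ (b s) * (slope ρ 0 (α s) / β s) + (φ (b s) - 1) / s))
      (𝓝[>] (0:ℝ)) (𝓝 (σ2 * (ρ'0 / Real.sqrt (u x)))) := by
    simpa using hT
  -- eventual equality with the actual difference quotient
  refine hT'.congr' ?_
  filter_upwards [self_mem_nhdsWithin] with s hs
  have hs0 : (0:ℝ) < s := hs
  have hnorm : ‖x - (x + s • e)‖ = s := by
    have h1 : x - (x + s • e) = -(s • e) := by abel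
    rw [h1, norm_neg, norm_smul, he, mul_one, Real.norm_eq_abs, abs_of_pos hs0]
  have hαs : s / Real.sqrt ((u x + b s) / 2) = α s := rfl
  rw [hk, hnorm, hαs]
  have hβne : β s ≠ 0 := (hβpos s).ne'
  have hαne : α s ≠ 0 := (div_pos hs0 (hβpos s)).ne'
  have hαβ : α s * β s = s := by
    rw [hαdef]; field_simp
  rw [slope_def_field, hρ0, sub_zero, div_div, hαβ]
  have hφb : σ2 * (c * (u x * b s) ^ ((d:ℝ)/4) / (u x + b s) ^ ((d:ℝ)/2)) * ρ (α s)
      = σ2 * φ (b s) * ρ (α s) := by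
    rw [hφdef]; ring
  rw [show u (x + s • e) = b s from rfl] at *
  rw [hφb]
  field_simp
  ring

/-- Forward direction of Proposition 2 at the level of the Paciorek covariance
function: if `u` is locally Lipschitz, `ρ 0 = 1`, `ρ` has a nonzero one-sided
derivative from the right at `0`, and the Paciorek kernel `k` is stationary,
then the length-scale function `u` is constant. -/
theorem paciorek_kernel_stationary_implies_constant_lengthscale
    (d : ℕ) (hd : 1 ≤ d) (σ2 : ℝ) (hσ2 : 0 < σ2) (ρ : ℝ → ℝ)
    (u : EuclideanSpace ℝ (Fin d) → ℝ) (hu : ∀ x, 0 < u x)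
    (k : EuclideanSpace ℝ (Fin d) → EuclideanSpace ℝ (Fin d) → ℝ)
    (hk : ∀ x x' : EuclideanSpace ℝ (Fin d),
      k x x' = σ2 * ((2:ℝ) ^ ((d:ℝ)/2) * (u x * u x') ^ ((d:ℝ)/4) /
          (u x + u x') ^ ((d:ℝ)/2)) *
        ρ (‖x - x'‖ / Real.sqrt ((u x + u x') / 2)))
    (hLip : LocallyLipschitz u) (hρ0 : ρ 0 = 1)
    (ρ'0 : ℝ) (hρ' : HasDerivWithinAt ρ ρ'0 (Set.Ici (0:ℝ)) 0) (hρ'ne : ρ'0 ≠ 0)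
    (hstat : ∀ x x' t : EuclideanSpace ℝ (Fin d), k (x + t) (x' + t) = k x x') :
    ∀ x y : EuclideanSpace ℝ (Fin d), u x = u y := by
  intro x y
  set e : EuclideanSpace ℝ (Fin d) := EuclideanSpace.single (⟨0, hd⟩ : Fin d) (1:ℝ) with he0
  have he : ‖e‖ = 1 := by
    rw [he0, EuclideanSpace.norm_single]; norm_num
  have hx := paciorek_aux d σ2 ρ u hu k hk hLip hρ0 ρ'0 hρ' x e he
  have hy := paciorek_aux d σ2 ρ u hu k hk hLip hρ0 ρ'0 hρ' y e he
  have hfe : (fun s : ℝ => (k x (x + s • e) - σ2) / s)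
      = (fun s : ℝ => (k y (y + s • e) - σ2) / s) := by
    funext s
    have h := hstat y (y + s • e) (x - y)
    have h1 : y + (x - y) = x := by abel
    have h2 : y + s • e + (x - y) = x + s • e := by abel
    rw [h1, h2] at h
    rw [h]
  rw [hfe] at hx
  have hlim : σ2 * (ρ'0 / Real.sqrt (u x)) = σ2 * (ρ'0 / Real.sqrt (u y)) :=
    tendsto_nhds_unique hx hy
  have h1 : ρ'0 / Real.sqrt (u x) = ρ'0 / Real.sqrt (u y) :=
    mul_left_cancel₀ hσ2.ne' hlim
  have hsx : (0:ℝ) < Real.sqrt (u x) := Real.sqrt_pos.mpr (hu x)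
  have hsy : (0:ℝ) < Real.sqrt (u y) := Real.sqrt_pos.mpr (hu y)
  have h2 : Real.sqrt (u x) = Real.sqrt (u y) := by
    field_simp at h1
    linarith
  exact (Real.sqrt_inj (hu x).le (hu y).le).mp h2
end
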